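/- Define integers e_n = 2·(c_B(n) − c_A(n)) + 1 for n ≥ 0, and let E = Σ_{n≥0} e_n X^n ∈ ℤ⟦X⟧ be the corresponding formal power series. Then E² · (4X⁴ − 4X³ + X² − 2X + 1) = 1 in the ring of formal power series ℤ⟦X⟧. (This is the algebraic form of the identity Σ Δ_n (2t)^n = 1/(2√(4t⁴−4t³+t²−2t+1)) − 1/(2(1−t)).) -/

import Mathlib

open PowerSeries

/-- Bob's score: number of indices `i < n-1` with `s i = H` and `s (i+1) = T`
    (`true` = heads). -/
def bobScore {n : ℕ} (s : Fin n → Bool) : ℕ :=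
  (Finset.univ.filter (fun i : Fin (n - 1) =>
    s ⟨i.1, lt_of_lt_of_le i.2 (Nat.sub_le n 1)⟩ = true ∧
    s ⟨i.1 + 1, Nat.add_lt_of_lt_sub i.2⟩ = false)).card

/-- Alice's score: number of indices `i < n-1` with `s i = H` and `s (i+1) = H`. -/
def aliceScore {n : ℕ} (s : Fin n → Bool) : ℕ :=
  (Finset.univ.filter (fun i : Fin (n - 1) =>
    s ⟨i.1, lt_of_lt_of_le i.2 (Nat.sub_le n 1)⟩ = true ∧
    s ⟨i.1 + 1, Nat.add_lt_of_lt_sub i.2⟩ = true)).card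

/-- Number of length-`n` coin sequences where Bob's score strictly exceeds Alice's. -/
def cB (n : ℕ) : ℕ :=
  (Finset.univ.filter (fun s : Fin n → Bool => aliceScore s < bobScore s)).card

/-- Number of length-`n` coin sequences where Alice's score strictly exceeds Bob's. -/
def cA (n : ℕ) : ℕ :=
  (Finset.univ.filter (fun s : Fin n → Bool => bobScore s < aliceScore s)).card

/-- `e_n = 2 (c_B(n) - c_A(n)) + 1`. -/
def e (n : ℕ) : ℤ := 2 * ((cB n : ℤ) - (cA n : ℤ)) + 1

def zc : ℕ → ℤ
  | 0 => 0
  | 1 => 1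
  | 2 => 0
  | n+3 => zc (n+2) + ∑ i ∈ (Finset.range (n+2)).attach, zc i.1 * zc (n+1 - i.1)
termination_by n => n
decreasing_by
  · omega
  · have := Finset.mem_range.mp i.2; omega
  · have := Finset.mem_range.mp i.2; omega

lemma zc_succ (n : ℕ) : zc (n+3) = zc (n+2) + ∑ i ∈ Finset.range (n+2), zc i * zc (n+1-i) := by
  rw [zc]
  congr 1
  exact Finset.sum_attach (Finset.range (n+2)) (fun i => zc i * zc (n+1-i))

noncomputable def Zz : ℤ⟦X⟧ := PowerSeries.mk zc

lemma coeff_Zz (n : ℕ) : (coeff (R := ℤ) n) Zz = zc n := coeff_mk n zc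

lemma coeff_X_mul' (f : ℤ⟦X⟧) (n : ℕ) :
    coeff (R := ℤ) n (X * f) = if n = 0 then 0 else coeff (R := ℤ) (n-1) f := by
  cases n with
  | zero => simp
  | succ m => simp [coeff_succ_X_mul]

lemma coeff_X2_mul' (f : ℤ⟦X⟧) (n : ℕ) :
    coeff (R := ℤ) n (X^2 * f) = if n ≤ 1 then 0 else coeff (R := ℤ) (n-2) f := by
  rcases n with _|_|m
  · simp [pow_two, mul_assoc, coeff_X_mul']
  · simp [pow_two, mul_assoc, coeff_succ_X_mul, coeff_X_mul']
  · rw [pow_two, mul_assoc, coeff_succ_X_mul, coeff_succ_X_mul]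
    simp

lemma Zeq : (1 - X) * Zz = X - X^2 + X^2 * Zz^2 := by
  have hsq : ∀ n : ℕ, (coeff (R := ℤ) n) (Zz^2) = ∑ i ∈ Finset.range (n+1), zc i * zc (n-i) := by
    intro n
    rw [pow_two, coeff_mul, Finset.Nat.sum_antidiagonal_eq_sum_range_succ_mk]
    simp [coeff_Zz]
  ext n
  rw [sub_mul, one_mul, map_sub, map_add, map_sub, coeff_X_mul', coeff_X2_mul', coeff_X,
    coeff_X_pow, hsq]
  rcases n with _|_|_|n
  · simp [coeff_Zz, zc]
  · simp [coeff_Zz, zc]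
  · simp [coeff_Zz, zc]
  · rw [if_neg (by omega), if_neg (by omega), if_neg (by omega), if_neg (by omega)]
    rw [coeff_Zz, coeff_Zz]
    rw [show (n+3-1 : ℕ) = n+2 from rfl, show (n+3-2:ℕ) = n+1 from rfl]
    rw [zc_succ]
    rw [show (n+1+1 : ℕ) = n+2 from rfl]
    ring

noncomputable def jj : ℤ⟦X⟧ := invOfUnit (1 - X) 1
noncomputable def rr : ℤ⟦X⟧ := invOfUnit (1 - X - X^2*Zz - 2*X^3) 1

lemma hj : (1 - X) * jj = 1 := by
  apply mul_invOfUnit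
  simp

lemma hr : (1 - X - X^2*Zz - 2*X^3) * rr = 1 := by
  apply mul_invOfUnit
  have : constantCoeff (R := ℤ) Zz = 0 := by
    have := coeff_Zz 0
    rwa [coeff_zero_eq_constantCoeff, zc] at this
  simp [this]

/-- The "star" functional equation characterizing the generating functions `k ↦ Σₙ hₙ(k) Xⁿ`. -/
def StarSol (F : ℤ → ℤ⟦X⟧) : Prop :=
  ∀ k : ℤ, (1 - X) * F k = X * (1-X) * F (k+1) + X^2 * F (k-1) + (if k = 0 then X else 0)

lemma star_unique {F G : ℤ → ℤ⟦X⟧} (hF : StarSol F) (hG : StarSol G) : ∀ k, F k = G k := by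
  have key : ∀ n : ℕ, ∀ k : ℤ, coeff (R := ℤ) n (F k) = coeff (R := ℤ) n (G k) := by
    intro n
    induction n using Nat.strong_induction_on with
    | _ n ih =>
      intro k
      have hsub : F k - G k = X * (F k - G k) + X * (F (k+1) - G (k+1))
          - X^2 * (F (k+1) - G (k+1)) + X^2 * (F (k-1) - G (k-1)) := by
        linear_combination hF k - hG k
      have hc := congrArg (coeff (R := ℤ) n) hsub
      simp only [map_add, map_sub, coeff_X_mul', coeff_X2_mul'] at hc
      rcases n with _|m
      · simp at hc ⊢
        linarith
      · simp only [Nat.add_sub_cancel] at hc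
        rw [ih m (by omega) k, ih m (by omega) (k+1), sub_self, sub_self] at hc
        rcases m with _|p
        · simp at hc ⊢
          linarith
        · rw [if_neg (by omega), if_neg (by omega)] at hc
          simp only [show (p+1+1-2 : ℕ) = p by omega] at hc
          rw [ih p (by omega) (k+1), ih p (by omega) (k-1), sub_self, sub_self] at hc
          simp at hc ⊢
          linarith
  intro k
  ext n
  exact key n k

noncomputable def Usol : ℤ → ℤ⟦X⟧
  | Int.ofNat 0 => X*(1 - X - X^2*Zz)*jj*rr
  | Int.ofNat (n+1) => X^3*jj*rr * (X*Zz*jj)^n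
  | Int.negSucc n => X^2*rr * Zz^n

lemma Weq : (1-X) * (X*Zz*jj) = X * (1-X) * (X*Zz*jj)^2 + X^2 := by
  linear_combination (X*jj) * Zeq + (X^2 - X^3*Zz^2*jj) * hj

lemma starSol : StarSol Usol := by
  intro k
  rcases k with (_|n)|(_|n)
  · have e1 : (Int.ofNat 0) + 1 = Int.ofNat 1 := rfl
    have e2 : (Int.ofNat 0) - 1 = Int.negSucc 0 := rfl
    rw [e1, e2, if_pos (show (Int.ofNat 0 : ℤ) = 0 from rfl)]
    show (1-X) * (X*(1 - X - X^2*Zz)*jj*rr) =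
      X*(1-X)*(X^3*jj*rr * (X*Zz*jj)^0) + X^2*(X^2*rr * Zz^0) + X
    rw [pow_zero, pow_zero]
    linear_combination X*hr + (X*(1 - X - X^2*Zz)*rr - X^4*rr)*hj
  · have e1 : (Int.ofNat (n+1)) + 1 = Int.ofNat (n+2) := rfl
    have e2 : (Int.ofNat (n+1)) - 1 = Int.ofNat n := by
      rw [Int.ofNat_eq_coe, Int.ofNat_eq_coe]; push_cast; ring
    rw [e1, e2, if_neg (by rw [Int.ofNat_eq_coe]; omega)]
    rcases n with _|n
    · show (1-X) * (X^3*jj*rr * (X*Zz*jj)^0) =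
        X*(1-X)*(X^3*jj*rr * (X*Zz*jj)^1) + X^2*(X*(1 - X - X^2*Zz)*jj*rr) + 0
      rw [pow_zero, pow_one]
      linear_combination (-(X^5)*Zz*jj*rr)*hj
    · show (1-X) * (X^3*jj*rr * (X*Zz*jj)^(n+1)) =
        X*(1-X)*(X^3*jj*rr * (X*Zz*jj)^(n+2)) + X^2*(X^3*jj*rr * (X*Zz*jj)^n) + 0
      have : ∀ m : ℕ, (X*Zz*jj : ℤ⟦X⟧)^(m+1) = (X*Zz*jj)^m * (X*Zz*jj) := fun m => pow_succ _ _
      rw [this, show ((n+2):ℕ) = (n+1)+1 from rfl, this, this]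
      linear_combination (X^3*jj*rr * (X*Zz*jj)^n) * Weq
  · have e1 : (Int.negSucc 0) + 1 = Int.ofNat 0 := rfl
    have e2 : (Int.negSucc 0) - 1 = Int.negSucc 1 := rfl
    rw [e1, e2, if_neg (by simp)]
    show (1-X) * (X^2*rr * Zz^0) =
      X*(1-X)*(X*(1 - X - X^2*Zz)*jj*rr) + X^2*(X^2*rr * Zz^1) + 0
    rw [pow_zero, pow_one]
    linear_combination (-(X^2)*(1 - X - X^2*Zz)*rr)*hj
  · have e1 : (Int.negSucc (n+1)) + 1 = Int.negSucc n := rfl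
    have e2 : (Int.negSucc (n+1)) - 1 = Int.negSucc (n+2) := rfl
    rw [e1, e2, if_neg (by simp)]
    show (1-X) * (X^2*rr * Zz^(n+1)) =
      X*(1-X)*(X^2*rr * Zz^n) + X^2*(X^2*rr * Zz^(n+2)) + 0
    have : ∀ m : ℕ, (Zz : ℤ⟦X⟧)^(m+1) = Zz^m * Zz := fun m => pow_succ _ _
    rw [this, show ((n+2):ℕ) = (n+1)+1 from rfl, this, this]
    linear_combination (X^2*rr*Zz^n) * Zeq

/-! Auxiliary combinatorial development -/

def extB {n : ℕ} (s : Fin n → Bool) : ℕ → Bool := fun i => if h : i < n then s ⟨i, h⟩ else false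

lemma extB_eq {n : ℕ} (s : Fin n → Bool) {j : ℕ} (h : j < n) : extB s j = s ⟨j, h⟩ := dif_pos h

lemma extB_neg {n : ℕ} (s : Fin n → Bool) {j : ℕ} (h : ¬ j < n) : extB s j = false := dif_neg h

lemma bob_eq {n : ℕ} (s : Fin n → Bool) :
    bobScore s = ∑ i ∈ Finset.range (n-1),
      (if extB s i = true ∧ extB s (i+1) = false then 1 else 0) := by
  rw [bobScore, Finset.card_filter, ← Fin.sum_univ_eq_sum_range]
  refine Finset.sum_congr rfl fun i _ => ?_
  rw [extB_eq s (lt_of_lt_of_le i.2 (Nat.sub_le n 1)), extB_eq s (Nat.add_lt_of_lt_sub i.2)]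

lemma alice_eq {n : ℕ} (s : Fin n → Bool) :
    aliceScore s = ∑ i ∈ Finset.range (n-1),
      (if extB s i = true ∧ extB s (i+1) = true then 1 else 0) := by
  rw [aliceScore, Finset.card_filter, ← Fin.sum_univ_eq_sum_range]
  refine Finset.sum_congr rfl fun i _ => ?_
  rw [extB_eq s (lt_of_lt_of_le i.2 (Nat.sub_le n 1)), extB_eq s (Nat.add_lt_of_lt_sub i.2)]

lemma extB_snoc {n : ℕ} (s : Fin n → Bool) (b : Bool) (j : ℕ) :
    extB (Fin.snoc s b) j = if j < n then extB s j else if j = n then b else false := by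
  rcases lt_trichotomy j n with h|h|h
  · rw [if_pos h, extB_eq (Fin.snoc s b) (show j < n+1 by omega), extB_eq s h]
    have he : (⟨j, show j < n+1 by omega⟩ : Fin (n+1)) = Fin.castSucc ⟨j, h⟩ := rfl
    rw [he, Fin.snoc_castSucc]
  · subst h
    rw [if_neg (lt_irrefl j), if_pos rfl, extB_eq (Fin.snoc s b) (Nat.lt_succ_self j)]
    have he : (⟨j, Nat.lt_succ_self j⟩ : Fin (j+1)) = Fin.last j := rfl
    rw [he, Fin.snoc_last]
  · rw [if_neg (by omega), if_neg (by omega), extB_neg _ (by omega)]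

def lastB {n : ℕ} (s : Fin n → Bool) : Bool := extB s (n-1)

lemma lastB_snoc {n : ℕ} (s : Fin n → Bool) (b : Bool) : lastB (Fin.snoc s b) = b := by
  rw [lastB, show ((n+1)-1 : ℕ) = n from rfl, extB_snoc, if_neg (lt_irrefl n), if_pos rfl]

def dsc {n : ℕ} (s : Fin n → Bool) : ℤ := (bobScore s : ℤ) - (aliceScore s : ℤ)

lemma dsc_nil (s : Fin 0 → Bool) : dsc s = 0 := by
  rw [dsc, bob_eq, alice_eq]; simp

lemma lastB_nil (s : Fin 0 → Bool) : lastB s = false := by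
  rw [lastB]; exact extB_neg s (by omega)

lemma bob_snoc {n : ℕ} (s : Fin (n+1) → Bool) (b : Bool) :
    bobScore (Fin.snoc s b) = bobScore s + (if extB s n = true ∧ b = false then 1 else 0) := by
  rw [bob_eq, bob_eq, show ((n+2)-1 : ℕ) = n+1 from rfl, show ((n+1)-1 : ℕ) = n from rfl,
    Finset.sum_range_succ]
  congr 1
  · refine Finset.sum_congr rfl fun i hi => ?_
    have hi' := Finset.mem_range.mp hi
    rw [extB_snoc, extB_snoc, if_pos (show i < n+1 by omega), if_pos (show i+1 < n+1 by omega)]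
  · rw [extB_snoc, extB_snoc, if_pos (show n < n+1 by omega),
      if_neg (show ¬ n+1 < n+1 by omega), if_pos (show n+1 = n+1 from rfl)]

lemma alice_snoc {n : ℕ} (s : Fin (n+1) → Bool) (b : Bool) :
    aliceScore (Fin.snoc s b) = aliceScore s + (if extB s n = true ∧ b = true then 1 else 0) := by
  rw [alice_eq, alice_eq, show ((n+2)-1 : ℕ) = n+1 from rfl, show ((n+1)-1 : ℕ) = n from rfl,
    Finset.sum_range_succ]
  congr 1
  · refine Finset.sum_congr rfl fun i hi => ?_
    have hi' := Finset.mem_range.mp hi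
    rw [extB_snoc, extB_snoc, if_pos (show i < n+1 by omega), if_pos (show i+1 < n+1 by omega)]
  · rw [extB_snoc, extB_snoc, if_pos (show n < n+1 by omega),
      if_neg (show ¬ n+1 < n+1 by omega), if_pos (show n+1 = n+1 from rfl)]

lemma dsc_snoc {n : ℕ} (s : Fin n → Bool) (b : Bool) :
    dsc (Fin.snoc s b) = dsc s + (if lastB s = true then (if b = true then -1 else 1) else 0) := by
  cases n with
  | zero =>
    have h1 : dsc (Fin.snoc s b) = 0 := by rw [dsc, bob_eq, alice_eq]; simp
    rw [h1, dsc_nil, lastB_nil]; simp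
  | succ m =>
    rw [dsc, bob_snoc, alice_snoc, dsc, show lastB s = extB s m from rfl]
    cases hb : b <;> cases he : extB s m <;> simp [hb, he] <;> push_cast <;> ring

def hCt (n : ℕ) (k : ℤ) : ℕ :=
  (Finset.univ.filter fun s : Fin n → Bool => lastB s = true ∧ dsc s = k).card

def tCt (n : ℕ) (k : ℤ) : ℕ :=
  (Finset.univ.filter fun s : Fin n → Bool => lastB s = false ∧ dsc s = k).card

lemma sum_snoc {M : Type*} [AddCommMonoid M] {n : ℕ} (F : (Fin (n+1) → Bool) → M) :
    ∑ s : Fin (n+1) → Bool, F s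
      = ∑ s : Fin n → Bool, (F (Fin.snoc s true) + F (Fin.snoc s false)) := by
  rw [← Fintype.sum_equiv (Fin.snocEquiv (fun _ => Bool))
    (fun p => F (Fin.snoc p.2 p.1)) F (fun p => rfl)]
  rw [Fintype.sum_prod_type, Fintype.sum_bool, ← Finset.sum_add_distrib]

lemma hCt_zero (k : ℤ) : hCt 0 k = 0 := by
  have h0 : ∀ s : Fin 0 → Bool, s ∈ Finset.univ → ¬(lastB s = true ∧ dsc s = k) := by
    intro s _ h
    rw [lastB_nil] at h
    exact Bool.false_ne_true h.1
  rw [hCt, Finset.filter_false_of_mem h0, Finset.card_empty]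

lemma tCt_zero (k : ℤ) : tCt 0 k = if k = 0 then 1 else 0 := by
  rcases eq_or_ne k 0 with rfl|hk
  · rw [if_pos rfl, tCt]
    have h1 : (Finset.univ.filter fun s : Fin 0 → Bool => lastB s = false ∧ dsc s = 0)
        = Finset.univ := by
      apply Finset.filter_true_of_mem
      intro s _
      exact ⟨lastB_nil s, dsc_nil s⟩
    rw [h1, Finset.card_univ]
    simp
  · have h0 : ∀ s : Fin 0 → Bool, s ∈ Finset.univ → ¬(lastB s = false ∧ dsc s = k) := by
      intro s _ h
      exact hk ((h.2).symm.trans (dsc_nil s))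
    rw [if_neg hk, tCt, Finset.filter_false_of_mem h0, Finset.card_empty]

lemma hCt_succ (n : ℕ) (k : ℤ) : hCt (n+1) k = hCt n (k+1) + tCt n k := by
  rw [hCt, hCt, tCt, Finset.card_filter, Finset.card_filter, Finset.card_filter,
    sum_snoc (fun s => if lastB s = true ∧ dsc s = k then 1 else 0), ← Finset.sum_add_distrib]
  refine Finset.sum_congr rfl fun s _ => ?_
  rw [dsc_snoc, dsc_snoc, lastB_snoc, lastB_snoc]
  cases hl : lastB s
  · simp [hl]
  · simp only [hl, if_pos rfl]
    have h : dsc s + -1 = k ↔ dsc s = k + 1 := by omega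
    simp [h]

lemma tCt_succ (n : ℕ) (k : ℤ) : tCt (n+1) k = hCt n (k-1) + tCt n k := by
  rw [tCt, hCt, tCt, Finset.card_filter, Finset.card_filter, Finset.card_filter,
    sum_snoc (fun s => if lastB s = false ∧ dsc s = k then 1 else 0), ← Finset.sum_add_distrib]
  refine Finset.sum_congr rfl fun s _ => ?_
  rw [dsc_snoc, dsc_snoc, lastB_snoc, lastB_snoc]
  cases hl : lastB s
  · simp [hl]
  · simp only [hl, if_pos rfl]
    have h : dsc s + 1 = k ↔ dsc s = k - 1 := by omega
    simp [h]

def Dl (n : ℕ) : ℤ := (cB n : ℤ) - (cA n : ℤ)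

def sg (m : ℤ) : ℤ := if 0 < m then 1 else if m < 0 then -1 else 0

lemma delta_eq (n : ℕ) : Dl n = ∑ s : Fin n → Bool, sg (dsc s) := by
  rw [Dl, cB, cA, Finset.card_filter, Finset.card_filter]
  push_cast
  rw [← Finset.sum_sub_distrib]
  refine Finset.sum_congr rfl fun s _ => ?_
  simp only [sg, dsc]
  split_ifs <;> omega

lemma delta_zero : Dl 0 = 0 := by
  rw [delta_eq]
  simp [dsc_nil, sg]

lemma hCt_cast (n : ℕ) (k : ℤ) :
    (hCt n k : ℤ) = ∑ s : Fin n → Bool, (if lastB s = true ∧ dsc s = k then (1:ℤ) else 0) := by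
  rw [hCt, Finset.card_filter]
  push_cast
  rfl

lemma delta_succ (n : ℕ) : Dl (n+1) = 2 * Dl n + (hCt n (-1) : ℤ) - (hCt n 1 : ℤ) := by
  rw [delta_eq, sum_snoc (fun s => sg (dsc s))]
  have hpt : ∀ s : Fin n → Bool, sg (dsc (Fin.snoc s true)) + sg (dsc (Fin.snoc s false))
      = 2 * sg (dsc s) + (if lastB s = true ∧ dsc s = -1 then (1:ℤ) else 0)
        - (if lastB s = true ∧ dsc s = 1 then (1:ℤ) else 0) := by
    intro s
    rw [dsc_snoc, dsc_snoc]
    cases hl : lastB s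
    · simp [hl]
      ring
    · simp [hl]
      simp only [sg]
      split_ifs <;> omega
  rw [Finset.sum_congr rfl fun s _ => hpt s]
  rw [Finset.sum_sub_distrib, Finset.sum_add_distrib, ← Finset.mul_sum, ← delta_eq,
    ← hCt_cast, ← hCt_cast]


noncomputable def Us (k : ℤ) : ℤ⟦X⟧ := PowerSeries.mk fun n => (hCt n k : ℤ)
noncomputable def Vs (k : ℤ) : ℤ⟦X⟧ := PowerSeries.mk fun n => (tCt n k : ℤ)
noncomputable def Ds : ℤ⟦X⟧ := PowerSeries.mk Dl
noncomputable def Jj : ℤ⟦X⟧ := PowerSeries.mk fun _ => (1:ℤ)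

lemma SU (k : ℤ) : Us k = X * Us (k+1) + X * Vs k := by
  ext n
  rw [map_add, coeff_X_mul', coeff_X_mul']
  cases n with
  | zero => simp [Us, hCt_zero]
  | succ m =>
    rw [if_neg (Nat.succ_ne_zero m), if_neg (Nat.succ_ne_zero m), Nat.add_sub_cancel]
    simp only [Us, Vs, coeff_mk]
    rw [hCt_succ]
    push_cast
    ring

lemma SV (k : ℤ) : Vs k = X * Us (k-1) + X * Vs k + (if k = 0 then 1 else 0) := by
  by_cases hk : k = 0
  · subst hk
    rw [if_pos rfl]
    ext n
    rw [map_add, map_add, coeff_X_mul', coeff_X_mul']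
    cases n with
    | zero => simp [Vs, tCt_zero]
    | succ m =>
      rw [if_neg (Nat.succ_ne_zero m), if_neg (Nat.succ_ne_zero m), Nat.add_sub_cancel]
      simp only [Vs, Us, coeff_mk]
      rw [tCt_succ]
      push_cast
      simp [coeff_one]
  · rw [if_neg hk]
    ext n
    rw [map_add, map_add, coeff_X_mul', coeff_X_mul']
    cases n with
    | zero => simp [Vs, tCt_zero, hk]
    | succ m =>
      rw [if_neg (Nat.succ_ne_zero m), if_neg (Nat.succ_ne_zero m), Nat.add_sub_cancel]
      simp only [Vs, Us, coeff_mk, map_zero]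
      rw [tCt_succ]
      push_cast
      ring

lemma starU : StarSol Us := by
  intro k
  by_cases hk : k = 0
  · subst hk
    rw [if_pos rfl]
    have h2 := SV 0
    rw [if_pos rfl] at h2
    linear_combination (1-X) * SU 0 + X * h2
  · rw [if_neg hk]
    have h2 := SV k
    rw [if_neg hk] at h2
    linear_combination (1-X) * SU k + X * h2

lemma hUsol : ∀ k, Us k = Usol k := star_unique starU starSol

lemma hA : Us 1 = X^3*jj*rr := by
  rw [hUsol 1]
  have h1 : Usol 1 = X^3*jj*rr * (X*Zz*jj)^0 := rfl
  rw [h1, pow_zero, mul_one]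

lemma hB : Us (-1) = X^2*rr := by
  rw [hUsol (-1)]
  have h1 : Usol (-1) = X^2*rr * Zz^0 := rfl
  rw [h1, pow_zero, mul_one]

lemma hD2 : Ds = X*Ds + X*Ds + X*(Us (-1)) - X*(Us 1) := by
  ext n
  simp only [map_sub, map_add, coeff_X_mul']
  cases n with
  | zero => simp [Ds, delta_zero]
  | succ m =>
    simp only [Nat.succ_ne_zero, if_false, Nat.add_sub_cancel]
    simp only [Ds, Us, coeff_mk]
    rw [delta_succ]
    ring

lemma hJ : Jj = X*Jj + 1 := by
  ext n
  rw [map_add, coeff_X_mul']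
  cases n with
  | zero => simp [Jj]
  | succ m =>
    rw [if_neg (Nat.succ_ne_zero m), Nat.add_sub_cancel]
    simp [Jj, coeff_one]

lemma hJu : (1-X)*Jj = 1 := by linear_combination hJ

lemma hEDs : PowerSeries.mk e = Ds + Ds + Jj := by
  ext n
  rw [map_add, map_add]
  simp only [Ds, Jj, coeff_mk, e, Dl]
  ring

lemma hDsA : Ds * (1 - 2*X) = X*(X^2*rr) - X*(X^3*jj*rr) := by
  linear_combination hD2 + X*hB - X*hA

lemma hT : (1-2*X : ℤ⟦X⟧) ≠ 0 := by
  intro h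
  have h0 := congrArg (constantCoeff (R := ℤ)) h
  simp at h0

lemma hDuR : Ds*((1-X)*(1 - X - X^2*Zz - 2*X^3)) = X^3 := by
  have hDsR : (Ds*((1-X)*(1 - X - X^2*Zz - 2*X^3)))*(1-2*X) = X^3*(1-2*X) := by
    linear_combination ((1-X)*(1 - X - X^2*Zz - 2*X^3))*hDsA
      + (X^3*(1-X) - X^4*(1-X)*jj)*hr + (-(X^4))*hj
  exact mul_right_cancel₀ hT hDsR

lemma hEuR : (PowerSeries.mk e)*((1-X)*(1 - X - X^2*Zz - 2*X^3)) = 1 - X - X^2*Zz := by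
  linear_combination ((1-X)*(1 - X - X^2*Zz - 2*X^3))*hEDs + 2*hDuR
    + (1 - X - X^2*Zz - 2*X^3)*hJu

lemma keylem : (1 - X - X^2*Zz)^2 * (1 - X - 4*X^3) = (1-X)*(1 - X - X^2*Zz - 2*X^3)^2 := by
  linear_combination (4*X^5)*Zeq

lemma hz0 : constantCoeff (R := ℤ) Zz = 0 := by
  have := coeff_Zz 0
  rwa [coeff_zero_eq_constantCoeff, zc] at this

lemma hne : ((1-X)*(1 - X - X^2*Zz - 2*X^3)^2 : ℤ⟦X⟧) ≠ 0 := by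
  intro h
  have h0 := congrArg (constantCoeff (R := ℤ)) h
  simp [hz0] at h0

/-- The generating function `E = Σ e_n Xⁿ ∈ ℤ⟦X⟧` satisfies
    `E² (4X⁴ - 4X³ + X² - 2X + 1) = 1`. -/
theorem e_gen_fun_sq_identity :
    (PowerSeries.mk e) ^ 2 *
      (4 * (X : ℤ⟦X⟧) ^ 4 - 4 * X ^ 3 + X ^ 2 - 2 * X + 1) = 1 := by
  have hbig : ((PowerSeries.mk e)^2 * (4*(X:ℤ⟦X⟧)^4 - 4*X^3 + X^2 - 2*X + 1))
      * ((1-X)*(1 - X - X^2*Zz - 2*X^3)^2)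
      = 1 * ((1-X)*(1 - X - X^2*Zz - 2*X^3)^2) := by
    linear_combination ((PowerSeries.mk e)*((1-X)*(1 - X - X^2*Zz - 2*X^3))
      + (1 - X - X^2*Zz))*(1 - X - 4*X^3)*hEuR + keylem
  exact mul_right_cancel₀ hne hbig
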